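/- Let Φ: ℝ^d × ℝ^n → ℝ be ρ-weakly convex in its first component uniformly in the second, concave and upper semicontinuous in its second component, and let h: ℝ^n → ℝ ∪ {+∞} be proper, convex, lower semicontinuous with bounded domain. Define φ(x) := max_y { Φ(x,y) − h(y) } and Y(x) := argmax_y { Φ(x,y) − h(y) }. Then for every x ∈ ℝ^d and every y* ∈ Y(x), ∂[Φ(·, y*)](x) ⊆ ∂φ(x); in particular, φ is ρ-weakly convex. -/

import Mathlib

open scoped RealInnerProductSpace

/-- Convexity for extended-real-valued functions, via the secant inequality. -/
def ERealConvexOn {E : Type*} [AddCommGroup E] [Module ℝ E] (g : E → EReal) : Prop :=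
  ∀ x y : E, ∀ a b : ℝ, 0 ≤ a → 0 ≤ b → a + b = 1 →
    g (a • x + b • y) ≤ (a : EReal) * g x + (b : EReal) * g y

/-- Fréchet subdifferential of a real-valued function. -/
def FrechetSubdiffR {d : ℕ} (g : EuclideanSpace ℝ (Fin d) → ℝ)
    (xbar : EuclideanSpace ℝ (Fin d)) : Set (EuclideanSpace ℝ (Fin d)) :=
  {v | ∀ c : ℝ, 0 < c → ∀ᶠ x in nhds xbar, g xbar + ⟪v, x - xbar⟫ - c * ‖x - xbar‖ ≤ g x}

/-- Fréchet subdifferential of an extended-real-valued function. -/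
def FrechetSubdiffE {d : ℕ} (g : EuclideanSpace ℝ (Fin d) → EReal)
    (xbar : EuclideanSpace ℝ (Fin d)) : Set (EuclideanSpace ℝ (Fin d)) :=
  {v | ∀ c : ℝ, 0 < c → ∀ᶠ x in nhds xbar,
    g xbar + ((⟪v, x - xbar⟫ - c * ‖x - xbar‖ : ℝ) : EReal) ≤ g x}

/-- The max function `φ(x) = sup_y { Φ(x,y) - h(y) }`. -/
noncomputable def maxFun {d n : ℕ}
    (Φ : EuclideanSpace ℝ (Fin d) → EuclideanSpace ℝ (Fin n) → ℝ)
    (h : EuclideanSpace ℝ (Fin n) → EReal) (x : EuclideanSpace ℝ (Fin d)) : EReal :=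
  ⨆ y, ((Φ x y : ℝ) : EReal) - h y

/-- extended Danskin: under weak convexity in `x`, concavity and
upper semicontinuity in `y`, and a proper convex lsc regularizer `h` with bounded
domain, every Fréchet subgradient of `Φ(·, y*)` at `x` with `y* ∈ Y(x)` is a
Fréchet subgradient of the max function `φ` at `x`; in particular `φ` is
`ρ`-weakly convex. -/
lemma EReal.exists_real_eq {e : EReal} (h1 : e ≠ ⊥) (h2 : e ≠ ⊤) : ∃ r : ℝ, e = (r : EReal) := by
  induction e with
  | bot => exact absurd rfl h1
  | coe r => exact ⟨r, rfl⟩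
  | top => exact absurd rfl h2

theorem stmt3 {d n : ℕ}
    (Φ : EuclideanSpace ℝ (Fin d) → EuclideanSpace ℝ (Fin n) → ℝ)
    (h : EuclideanSpace ℝ (Fin n) → EReal) (ρ : ℝ) (hρ : 0 ≤ ρ)
    (hwc : ∀ y, ConvexOn ℝ Set.univ (fun x => Φ x y + ρ / 2 * ‖x‖ ^ 2))
    (hconc : ∀ x, ConcaveOn ℝ Set.univ (fun y => Φ x y))
    (husc : ∀ x, UpperSemicontinuous (fun y => Φ x y))
    (hhproper : (∀ y, h y ≠ ⊥) ∧ ∃ y, h y ≠ ⊤)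
    (hhconv : ERealConvexOn h) (hhlsc : LowerSemicontinuous h)
    (hhdom : Bornology.IsBounded {y | h y ≠ ⊤}) :
    (∀ x ystar, ((Φ x ystar : ℝ) : EReal) - h ystar = maxFun Φ h x →
      ∀ v ∈ FrechetSubdiffR (fun x' => Φ x' ystar) x, v ∈ FrechetSubdiffE (maxFun Φ h) x) ∧
    ERealConvexOn (fun x => maxFun Φ h x + ((ρ / 2 * ‖x‖ ^ 2 : ℝ) : EReal)) := by
  constructor
  · -- Danskin inclusion
    intro x ystar heq v hv
    obtain ⟨hbot, y₀, hy₀⟩ := hhproper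
    obtain ⟨r₀, hr₀⟩ := EReal.exists_real_eq (hbot y₀) hy₀
    have hymax : ((Φ x y₀ : ℝ) : EReal) - h y₀ ≤ maxFun Φ h x :=
      le_iSup (fun y => ((Φ x y : ℝ) : EReal) - h y) y₀
    have hyne : h ystar ≠ ⊤ := by
      intro htop
      rw [htop] at heq
      simp only [EReal.sub_top] at heq
      rw [← heq, hr₀, ← EReal.coe_sub] at hymax
      exact (EReal.coe_ne_bot _) (le_bot_iff.1 hymax)
    obtain ⟨r, hr⟩ := EReal.exists_real_eq (hbot ystar) hyne
    intro c hc
    filter_upwards [hv c hc] with x' hx'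
    have hmx : maxFun Φ h x = ((Φ x ystar - r : ℝ) : EReal) := by
      rw [← heq, hr, ← EReal.coe_sub]
    have hle : maxFun Φ h x + ((⟪v, x' - x⟫ - c * ‖x' - x‖ : ℝ) : EReal)
        ≤ ((Φ x' ystar - r : ℝ) : EReal) := by
      rw [hmx, ← EReal.coe_add, EReal.coe_le_coe_iff]
      linarith
    refine hle.trans ?_
    have h2 : ((Φ x' ystar - r : ℝ) : EReal) = ((Φ x' ystar : ℝ) : EReal) - h ystar := by
      rw [hr, ← EReal.coe_sub]
    rw [h2]
    exact le_iSup (fun y => ((Φ x' y : ℝ) : EReal) - h y) ystar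
  · -- weak convexity of maxFun
    intro x x' a b ha hb hab
    set z := a • x + b • x' with hz
    set Cx : ℝ := ρ / 2 * ‖x‖ ^ 2 with hCx
    set Cx' : ℝ := ρ / 2 * ‖x'‖ ^ 2 with hCx'
    set Cz : ℝ := ρ / 2 * ‖z‖ ^ 2 with hCz
    set S : EReal := (a : EReal) * (maxFun Φ h x + (Cx : EReal))
      + (b : EReal) * (maxFun Φ h x' + (Cx' : EReal)) with hS
    have key : ∀ y, ((Φ z y : ℝ) : EReal) - h y ≤ S - (Cz : EReal) := by
      intro y
      by_cases htop : h y = ⊤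
      · simp [htop]
      obtain ⟨r, hr⟩ := EReal.exists_real_eq (hhproper.1 y) htop
      have hconv := (hwc y).2 (Set.mem_univ x) (Set.mem_univ x') ha hb hab
      simp only [smul_eq_mul] at hconv
      set t : ℝ := a * (Φ x y - r + Cx) + b * (Φ x' y - r + Cx') with ht
      have h1 : ((Φ x y - r + Cx : ℝ) : EReal) ≤ maxFun Φ h x + (Cx : EReal) := by
        rw [EReal.coe_add, EReal.coe_sub, ← hr]
        gcongr
        exact le_iSup (fun y' => ((Φ x y' : ℝ) : EReal) - h y') y
      have h2 : ((Φ x' y - r + Cx' : ℝ) : EReal) ≤ maxFun Φ h x' + (Cx' : EReal) := by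
        rw [EReal.coe_add, EReal.coe_sub, ← hr]
        gcongr
        exact le_iSup (fun y' => ((Φ x' y' : ℝ) : EReal) - h y') y
      have htS : (t : EReal) ≤ S := by
        rw [ht, EReal.coe_add, EReal.coe_mul, EReal.coe_mul, hS]
        refine add_le_add ?_ ?_
        · exact mul_le_mul_of_nonneg_left h1 (by exact_mod_cast ha)
        · exact mul_le_mul_of_nonneg_left h2 (by exact_mod_cast hb)
      have hreal : Φ z y - r ≤ t - Cz := by
        have hco : Φ z y + Cz ≤ a * (Φ x y + Cx) + b * (Φ x' y + Cx') := hconv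
        have hr1 : a * r + b * r = r := by rw [← add_mul, hab, one_mul]
        rw [ht]
        nlinarith [hco]
      calc ((Φ z y : ℝ) : EReal) - h y = ((Φ z y - r : ℝ) : EReal) := by
            rw [hr, ← EReal.coe_sub]
        _ ≤ ((t - Cz : ℝ) : EReal) := by exact_mod_cast hreal
        _ = (t : EReal) - (Cz : EReal) := EReal.coe_sub _ _
        _ ≤ S - (Cz : EReal) := EReal.sub_le_sub htS le_rfl
    have hsup : maxFun Φ h z ≤ S - (Cz : EReal) := iSup_le key
    calc maxFun Φ h z + (Cz : EReal) ≤ (S - (Cz : EReal)) + (Cz : EReal) := by gcongr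
      _ = S := EReal.sub_add_cancel
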